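/- Let B₁ ≠ B₂ ∈ ℂ and let P ∈ ℂ be a point not lying on the line through B₁ and B₂. Then there exists a direct isometry g of the plane with g ≠ id such that g(B₁) = B₁ (hence |g(Q) − B₁| = |Q − B₁| for every Q ∈ ℂ, so every range measurement taken from B₁ is preserved) and |g(P) − B₂| = |P − B₂|. -/

import Mathlib

/-- Negative `(N_m - 1)+1` result: if the single measurement point `P` sensed by the
second anchor is not aligned with the two anchors, there is a non-identity direct
isometry fixing `B₁` (hence preserving every measurement from `B₁`) that also
preserves the measurement of `P` from `B₂`. -/
theorem n_minus_one_plus_one_unconstructible (B1 B2 P : ℂ) (hB : B1 ≠ B2)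
    (hnc : ¬ Collinear ℝ ({B1, B2, P} : Set ℂ)) :
    ∃ g : ℂ → ℂ, (∃ a b : ℂ, ‖a‖ = 1 ∧ g = fun z => a * z + b) ∧
      g ≠ id ∧ g B1 = B1 ∧
      (∀ Q : ℂ, ‖g Q - B1‖ = ‖Q - B1‖) ∧
      ‖g P - B2‖ = ‖P - B2‖ := by
  set p : ℂ := P - B1 with hp
  set d : ℂ := B2 - B1 with hd
  have hd0 : d ≠ 0 := sub_ne_zero.mpr (Ne.symm hB)
  have hp0 : p ≠ 0 := by
    intro h
    apply hnc
    have hPB1 : P = B1 := by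
      have := sub_eq_zero.mp h; exact this
    rw [hPB1]
    have : ({B1, B2, B1} : Set ℂ) = {B1, B2} := by
      ext x; simp [or_comm, or_assoc]
    rw [this]
    exact collinear_pair ℝ B1 B2
  set a : ℂ := (starRingEnd ℂ p * d) / (p * starRingEnd ℂ d) with ha
  have habs : ‖a‖ = 1 := by
    rw [ha, norm_div, norm_mul, norm_mul, Complex.norm_conj, Complex.norm_conj]
    rw [mul_comm]
    exact div_self (mul_ne_zero (by simpa using hd0) (by simpa using hp0))
  have ha1 : a ≠ 1 := by
    intro h
    apply hnc
    have hden : p * starRingEnd ℂ d ≠ 0 := by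
      simp [hp0, hd0]
    have heq : starRingEnd ℂ p * d = p * starRingEnd ℂ d := by
      rw [ha, div_eq_one_iff_eq hden] at h
      exact h
    -- p/d is real: p * conj d = conj p * d means p/d = conj(p/d)
    -- so Im(p * conj d) = 0, hence p = t • d with t real
    have h1 : p * starRingEnd ℂ d = ((p * starRingEnd ℂ d).re : ℂ) := by
      have : starRingEnd ℂ (p * starRingEnd ℂ d) = p * starRingEnd ℂ d := by
        rw [map_mul, Complex.conj_conj]
        linear_combination heq
      exact (Complex.conj_eq_iff_re.mp this).symm
    set t : ℝ := (p * starRingEnd ℂ d).re / Complex.normSq d with ht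
    have hnsq : (Complex.normSq d : ℂ) ≠ 0 := by
      simp [Complex.normSq_eq_zero, hd0]
    have hpd : p = (t : ℂ) * d := by
      have h3 : starRingEnd ℂ d * d = (Complex.normSq d : ℂ) := by
        rw [mul_comm, Complex.mul_conj]
      have h4 : p * (Complex.normSq d : ℂ) = ((p * starRingEnd ℂ d).re : ℂ) * d := by
        calc p * (Complex.normSq d : ℂ) = p * (starRingEnd ℂ d * d) := by rw [h3]
          _ = p * starRingEnd ℂ d * d := by ring
          _ = ((p * starRingEnd ℂ d).re : ℂ) * d := by linear_combination d * h1
      rw [ht, Complex.ofReal_div, div_mul_eq_mul_div, ← h4, mul_div_assoc,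
        div_self hnsq, mul_one]
    rw [collinear_iff_of_mem (Set.mem_insert B1 _)]
    refine ⟨d, fun q hq => ?_⟩
    simp only [Set.mem_insert_iff, Set.mem_singleton_iff] at hq
    rcases hq with h | h | h <;> rw [h]
    · exact ⟨0, by simp⟩
    · exact ⟨1, by simp [hd, Complex.real_smul]⟩
    · refine ⟨t, ?_⟩
      have h5 : P - B1 = (t : ℂ) * d := hpd
      have : P = (t : ℂ) * d + B1 := by linear_combination h5
      simpa [Complex.real_smul] using this
  refine ⟨fun z => a * z + (B1 - a * B1), ⟨a, B1 - a * B1, habs, rfl⟩, ?_, by ring, ?_, ?_⟩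
  · intro h
    have h1 := congrFun h (B1 + 1)
    simp only [id] at h1
    apply ha1
    have : a * (B1 + 1) + (B1 - a * B1) = B1 + 1 := h1
    linear_combination this
  · intro Q
    have : a * Q + (B1 - a * B1) - B1 = a * (Q - B1) := by ring
    rw [this, norm_mul, habs, one_mul]
  · have key : a * P + (B1 - a * B1) - B2 = a * p - d := by
      rw [hp, hd]; ring
    rw [key]
    have hconj : a * p - d = d * starRingEnd ℂ (p - d) / starRingEnd ℂ d := by
      have hcd : starRingEnd ℂ d ≠ 0 := by simp [hd0]
      rw [ha, map_sub]
      field_simp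
      simp [hp, map_sub]
    rw [hconj, norm_div, norm_mul, Complex.norm_conj, Complex.norm_conj]
    rw [mul_comm, mul_div_assoc, div_self (by simpa using hd0), mul_one]
    congr 1
    rw [hp, hd]; ring
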